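/- If p is a quantum correlation from a finite set X to a finite set Y and q is a quantum correlation from Y to a finite set Z, then the composition q ∘ p is a quantum correlation from X to Z. -/

import Mathlib

open Finset Matrix Kronecker
open scoped ComplexOrder

lemma kronecker_conjT {m n : Type*} (A : Matrix m m ℂ) (B : Matrix n n ℂ) :
    (A ⊗ₖ B)ᴴ = Aᴴ ⊗ₖ Bᴴ := by
  ext ⟨i, j⟩ ⟨k, l⟩
  simp [conjTranspose_apply, kroneckerMap_apply, mul_comm]

lemma psd_kron {m n : Type*} [Fintype m] [Fintype n] [DecidableEq m] [DecidableEq n]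
    {A : Matrix m m ℂ} {B : Matrix n n ℂ} (hA : A.PosSemidef) (hB : B.PosSemidef) :
    (A ⊗ₖ B).PosSemidef := by
  exact hA.kronecker hB

lemma trace_submatrix_equiv' {m n : Type*} [Fintype m] [Fintype n] (e : m ≃ n)
    (M : Matrix n n ℂ) : (M.submatrix e e).trace = M.trace := by
  simp only [Matrix.trace, Matrix.diag, Matrix.submatrix_apply]
  exact e.sum_comp fun i => M i i

lemma sum_kron_left {ι m n : Type*} (s : Finset ι) (A : ι → Matrix m m ℂ) (B : Matrix n n ℂ) :
    (∑ i ∈ s, A i) ⊗ₖ B = ∑ i ∈ s, A i ⊗ₖ B := by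
  ext ⟨a, b⟩ ⟨c, d⟩
  simp only [Matrix.sum_apply, kroneckerMap_apply, Finset.sum_mul]

lemma sum_kron_right {ι m n : Type*} (s : Finset ι) (A : Matrix m m ℂ) (B : ι → Matrix n n ℂ) :
    A ⊗ₖ (∑ i ∈ s, B i) = ∑ i ∈ s, A ⊗ₖ B i := by
  ext ⟨a, b⟩ ⟨c, d⟩
  simp only [Matrix.sum_apply, kroneckerMap_apply, Finset.mul_sum]

lemma psd_sum {ι m : Type*} [Fintype m] (s : Finset ι) (f : ι → Matrix m m ℂ)
    (h : ∀ i ∈ s, (f i).PosSemidef) : (∑ i ∈ s, f i).PosSemidef :=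
  Finset.sum_induction f _ (fun _ _ ha hb => ha.add hb) Matrix.PosSemidef.zero h

lemma kron_submatrix {a b a' b' : Type*} (M : Matrix a a ℂ) (N : Matrix b b ℂ)
    (f : a' → a) (g : b' → b) :
    (M.submatrix f f) ⊗ₖ (N.submatrix g g)
      = (M ⊗ₖ N).submatrix (Prod.map f g) (Prod.map f g) := by
  ext ⟨i, j⟩ ⟨k, l⟩
  simp [kroneckerMap_apply]

lemma kron_swap {a b c d : Type*} (M : Matrix a a ℂ) (N : Matrix b b ℂ)
    (P : Matrix c c ℂ) (Q : Matrix d d ℂ) :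
    (M ⊗ₖ P) ⊗ₖ (N ⊗ₖ Q)
      = ((M ⊗ₖ N) ⊗ₖ (P ⊗ₖ Q)).submatrix
          (Equiv.prodProdProdComm a c b d) (Equiv.prodProdProdComm a c b d) := by
  ext ⟨⟨x, u⟩, ⟨y, v⟩⟩ ⟨⟨x', u'⟩, ⟨y', v'⟩⟩
  simp [kroneckerMap_apply, Equiv.prodProdProdComm]
  ring

-- ===== statement prelude (verbatim) =====

/-- A correlation from a finite set `X` to a finite set `Y`. -/
def IsCorrelation {X Y : Type*} [Fintype X] [Fintype Y]
    (p : Y → Y → X → X → ℝ) : Prop :=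
  (∀ yA yB xA xB, 0 ≤ p yA yB xA xB) ∧
  ∀ xA xB, (∑ yA : Y, ∑ yB : Y, p yA yB xA xB) = 1

/-- A correlation is synchronous if `p yA yB x x = 0` whenever `yA ≠ yB`. -/
def IsSynchronous {X Y : Type*} (p : Y → Y → X → X → ℝ) : Prop :=
  ∀ (x : X) (yA yB : Y), yA ≠ yB → p yA yB x x = 0

/-- Composition of correlations via Kolmogorov's law. -/
def Comp {X Y Z : Type*} [Fintype Y]
    (q : Z → Z → Y → Y → ℝ) (p : Y → Y → X → X → ℝ) :
    Z → Z → X → X → ℝ :=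
  fun zA zB xA xB => ∑ yA : Y, ∑ yB : Y, q zA zB yA yB * p yA yB xA xB

/-- The identity correlation on `X`. -/
def IdCorr (X : Type*) [DecidableEq X] : X → X → X → X → ℝ :=
  fun xA' xB' xA xB =>
    (if xA' = xA then (1 : ℝ) else 0) * (if xB' = xB then (1 : ℝ) else 0)

/-- The nonsignaling condition. -/
def IsNonsignaling {X Y : Type*} [Fintype Y] (p : Y → Y → X → X → ℝ) : Prop :=
  (∀ yA xA xB xB', (∑ yB : Y, p yA yB xA xB) = ∑ yB : Y, p yA yB xA xB') ∧
  (∀ yB xA xA' xB, (∑ yA : Y, p yA yB xA xB) = ∑ yA : Y, p yA yB xA' xB)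

/-- A classical (hidden variables) correlation. -/
def IsClassical {X Y : Type*} [Fintype X] [Fintype Y] (p : Y → Y → X → X → ℝ) : Prop :=
  ∃ (n : ℕ) (μ : Fin n → ℝ) (PrA PrB : Y → X → Fin n → ℝ),
    (∀ ω, 0 ≤ μ ω) ∧ ((∑ ω, μ ω) = 1) ∧
    (∀ y x ω, 0 ≤ PrA y x ω) ∧ (∀ x ω, (∑ y : Y, PrA y x ω) = 1) ∧
    (∀ y x ω, 0 ≤ PrB y x ω) ∧ (∀ x ω, (∑ y : Y, PrB y x ω) = 1) ∧
    ∀ yA yB xA xB, p yA yB xA xB = ∑ ω, μ ω * PrA yA xA ω * PrB yB xB ω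

/-- A quantum correlation. -/
def IsQuantum {X Y : Type*} [Fintype X] [Fintype Y] (p : Y → Y → X → X → ℝ) : Prop :=
  ∃ (dA dB : ℕ), 0 < dA ∧ 0 < dB ∧
    ∃ (ρ : Matrix (Fin dA × Fin dB) (Fin dA × Fin dB) ℂ)
      (E : X → Y → Matrix (Fin dA) (Fin dA) ℂ)
      (F : X → Y → Matrix (Fin dB) (Fin dB) ℂ),
      ρ.PosSemidef ∧ ρ.trace = 1 ∧
      (∀ x y, (E x y).PosSemidef) ∧ (∀ x, (∑ y : Y, E x y) = 1) ∧
      (∀ x y, (F x y).PosSemidef) ∧ (∀ x, (∑ y : Y, F x y) = 1) ∧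
      ∀ yA yB xA xB, (ρ * (E xA yA ⊗ₖ F xB yB)).trace = (p yA yB xA xB : ℂ)

/-- A symmetric correlation. -/
def IsSymmetric {X Y : Type*} (p : Y → Y → X → X → ℝ) : Prop :=
  ∀ yA yB xA xB, p yA yB xA xB = p yB yA xB xA

-- ===== auxiliary: a quantum model over arbitrary finite index types =====

lemma isQuantum_of_model {X Y : Type*} [Fintype X] [Fintype Y]
    {A B : Type*} [Fintype A] [Fintype B] [Nonempty A] [Nonempty B]
    [DecidableEq A] [DecidableEq B]
    (p : Y → Y → X → X → ℝ)
    (ρ : Matrix (A × B) (A × B) ℂ)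
    (E : X → Y → Matrix A A ℂ) (F : X → Y → Matrix B B ℂ)
    (hρ : ρ.PosSemidef) (htr : ρ.trace = 1)
    (hE : ∀ x y, (E x y).PosSemidef) (hEs : ∀ x, (∑ y : Y, E x y) = 1)
    (hF : ∀ x y, (F x y).PosSemidef) (hFs : ∀ x, (∑ y : Y, F x y) = 1)
    (h : ∀ yA yB xA xB, (ρ * (E xA yA ⊗ₖ F xB yB)).trace = (p yA yB xA xB : ℂ)) :
    IsQuantum p := by
  classical
  set eA : A ≃ Fin (Fintype.card A) := Fintype.equivFin A
  set eB : B ≃ Fin (Fintype.card B) := Fintype.equivFin B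
  set σ : Fin (Fintype.card A) × Fin (Fintype.card B) ≃ A × B :=
    (eA.prodCongr eB).symm
  refine ⟨Fintype.card A, Fintype.card B, Fintype.card_pos, Fintype.card_pos,
    ρ.submatrix σ σ,
    fun x y => (E x y).submatrix eA.symm eA.symm,
    fun x y => (F x y).submatrix eB.symm eB.symm, ?_, ?_, ?_, ?_, ?_, ?_, ?_⟩
  · exact (Matrix.posSemidef_submatrix_equiv σ).mpr hρ
  · rw [trace_submatrix_equiv' σ ρ, htr]
  · exact fun x y => (Matrix.posSemidef_submatrix_equiv eA.symm).mpr (hE x y)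
  · intro x
    have : (∑ y : Y, (E x y).submatrix ⇑eA.symm ⇑eA.symm)
        = ((∑ y : Y, E x y).submatrix ⇑eA.symm ⇑eA.symm) := by
      ext i j; simp [Matrix.sum_apply]
    rw [this, hEs x, Matrix.submatrix_one_equiv]
  · exact fun x y => (Matrix.posSemidef_submatrix_equiv eB.symm).mpr (hF x y)
  · intro x
    have : (∑ y : Y, (F x y).submatrix ⇑eB.symm ⇑eB.symm)
        = ((∑ y : Y, F x y).submatrix ⇑eB.symm ⇑eB.symm) := by
      ext i j; simp [Matrix.sum_apply]
    rw [this, hFs x, Matrix.submatrix_one_equiv]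
  · intro yA yB xA xB
    have hk : (E xA yA).submatrix ⇑eA.symm ⇑eA.symm ⊗ₖ (F xB yB).submatrix ⇑eB.symm ⇑eB.symm
        = (E xA yA ⊗ₖ F xB yB).submatrix σ σ := by
      rw [kron_submatrix]
      congr 1
    rw [hk]
    have : ρ.submatrix ⇑σ ⇑σ * (E xA yA ⊗ₖ F xB yB).submatrix ⇑σ ⇑σ
        = (ρ * (E xA yA ⊗ₖ F xB yB)).submatrix ⇑σ ⇑σ :=
      Matrix.submatrix_mul_equiv _ _ _ σ _
    rw [this, trace_submatrix_equiv' σ, h]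

/-- The composition of quantum correlations is a quantum correlation. -/
theorem composition_of_quantum {X Y Z : Type*} [Fintype X] [Fintype Y] [Fintype Z]
    (p : Y → Y → X → X → ℝ) (q : Z → Z → Y → Y → ℝ)
    (hp : IsCorrelation p) (hpq : IsQuantum p)
    (hq : IsCorrelation q) (hqq : IsQuantum q) :
    IsCorrelation (Comp q p) ∧ IsQuantum (Comp q p) := by
  classical
  constructor
  · constructor
    · intro zA zB xA xB
      apply Finset.sum_nonneg; intro yA _
      apply Finset.sum_nonneg; intro yB _
      exact mul_nonneg (hq.1 _ _ _ _) (hp.1 _ _ _ _)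
    · intro xA xB
      have key : (∑ zA : Z, ∑ zB : Z, Comp q p zA zB xA xB)
          = ∑ yA : Y, ∑ yB : Y, (∑ zA : Z, ∑ zB : Z, q zA zB yA yB) * p yA yB xA xB := by
        unfold Comp
        calc (∑ z1 : Z, ∑ z2 : Z, ∑ y1 : Y, ∑ y2 : Y, q z1 z2 y1 y2 * p y1 y2 xA xB)
            = ∑ z1 : Z, ∑ y1 : Y, ∑ z2 : Z, ∑ y2 : Y, q z1 z2 y1 y2 * p y1 y2 xA xB :=
              Finset.sum_congr rfl fun _ _ => Finset.sum_comm
          _ = ∑ y1 : Y, ∑ z1 : Z, ∑ z2 : Z, ∑ y2 : Y, q z1 z2 y1 y2 * p y1 y2 xA xB :=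
              Finset.sum_comm
          _ = ∑ y1 : Y, ∑ z1 : Z, ∑ y2 : Y, ∑ z2 : Z, q z1 z2 y1 y2 * p y1 y2 xA xB :=
              Finset.sum_congr rfl fun _ _ =>
                Finset.sum_congr rfl fun _ _ => Finset.sum_comm
          _ = ∑ y1 : Y, ∑ y2 : Y, ∑ z1 : Z, ∑ z2 : Z, q z1 z2 y1 y2 * p y1 y2 xA xB :=
              Finset.sum_congr rfl fun _ _ => Finset.sum_comm
          _ = ∑ y1 : Y, ∑ y2 : Y, (∑ z1 : Z, ∑ z2 : Z, q z1 z2 y1 y2) * p y1 y2 xA xB := by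
              simp only [Finset.sum_mul]
      rw [key]
      have h1 : ∀ y1 y2 : Y, (∑ z1 : Z, ∑ z2 : Z, q z1 z2 y1 y2) = 1 := fun y1 y2 => hq.2 y1 y2
      simp only [h1, one_mul]
      exact hp.2 xA xB
  · obtain ⟨dA1, dB1, hA1, hB1, ρ1, E1, F1, hρ1, ht1, hE1, hE1s, hF1, hF1s, h1⟩ := hpq
    obtain ⟨dA2, dB2, hA2, hB2, ρ2, E2, F2, hρ2, ht2, hE2, hE2s, hF2, hF2s, h2⟩ := hqq
    haveI : Nonempty (Fin dA1) := Fin.pos_iff_nonempty.mp hA1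
    haveI : Nonempty (Fin dA2) := Fin.pos_iff_nonempty.mp hA2
    haveI : Nonempty (Fin dB1) := Fin.pos_iff_nonempty.mp hB1
    haveI : Nonempty (Fin dB2) := Fin.pos_iff_nonempty.mp hB2
    set τ : (Fin dA1 × Fin dA2) × Fin dB1 × Fin dB2 ≃ (Fin dA1 × Fin dB1) × Fin dA2 × Fin dB2 :=
      Equiv.prodProdProdComm (Fin dA1) (Fin dA2) (Fin dB1) (Fin dB2)
    apply isQuantum_of_model (Comp q p)
      ((ρ1 ⊗ₖ ρ2).submatrix τ τ)
      (fun x z => ∑ y : Y, E1 x y ⊗ₖ E2 y z)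
      (fun x z => ∑ y : Y, F1 x y ⊗ₖ F2 y z)
    · exact (Matrix.posSemidef_submatrix_equiv τ).mpr (psd_kron hρ1 hρ2)
    · rw [trace_submatrix_equiv' τ, Matrix.trace_kronecker, ht1, ht2, mul_one]
    · intro x z
      exact psd_sum _ _ fun y _ => psd_kron (hE1 x y) (hE2 y z)
    · intro x
      rw [Finset.sum_comm]
      calc (∑ y : Y, ∑ z : Z, E1 x y ⊗ₖ E2 y z)
          = ∑ y : Y, E1 x y ⊗ₖ (∑ z : Z, E2 y z) := by
            exact Finset.sum_congr rfl fun y _ => (sum_kron_right _ _ _).symm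
        _ = ∑ y : Y, E1 x y ⊗ₖ (1 : Matrix (Fin dA2) (Fin dA2) ℂ) := by
            exact Finset.sum_congr rfl fun y _ => by rw [hE2s y]
        _ = (∑ y : Y, E1 x y) ⊗ₖ (1 : Matrix (Fin dA2) (Fin dA2) ℂ) := (sum_kron_left _ _ _).symm
        _ = 1 := by rw [hE1s x, Matrix.one_kronecker_one]
    · intro x z
      exact psd_sum _ _ fun y _ => psd_kron (hF1 x y) (hF2 y z)
    · intro x
      rw [Finset.sum_comm]
      calc (∑ y : Y, ∑ z : Z, F1 x y ⊗ₖ F2 y z)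
          = ∑ y : Y, F1 x y ⊗ₖ (∑ z : Z, F2 y z) := by
            exact Finset.sum_congr rfl fun y _ => (sum_kron_right _ _ _).symm
        _ = ∑ y : Y, F1 x y ⊗ₖ (1 : Matrix (Fin dB2) (Fin dB2) ℂ) := by
            exact Finset.sum_congr rfl fun y _ => by rw [hF2s y]
        _ = (∑ y : Y, F1 x y) ⊗ₖ (1 : Matrix (Fin dB2) (Fin dB2) ℂ) := (sum_kron_left _ _ _).symm
        _ = 1 := by rw [hF1s x, Matrix.one_kronecker_one]
    · intro zA zB xA xB
      have expand : (∑ yA : Y, E1 xA yA ⊗ₖ E2 yA zA) ⊗ₖ (∑ yB : Y, F1 xB yB ⊗ₖ F2 yB zB)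
          = ∑ yA : Y, ∑ yB : Y,
              (((E1 xA yA ⊗ₖ F1 xB yB) ⊗ₖ (E2 yA zA ⊗ₖ F2 yB zB)).submatrix τ τ) := by
        rw [sum_kron_left]
        apply Finset.sum_congr rfl; intro yA _
        rw [sum_kron_right]
        apply Finset.sum_congr rfl; intro yB _
        exact kron_swap _ _ _ _
      rw [expand, Finset.mul_sum, Matrix.trace_sum]
      have step : ∀ yA yB : Y,
          ((ρ1 ⊗ₖ ρ2).submatrix ⇑τ ⇑τ *
            ((E1 xA yA ⊗ₖ F1 xB yB) ⊗ₖ (E2 yA zA ⊗ₖ F2 yB zB)).submatrix ⇑τ ⇑τ).trace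
          = (q zA zB yA yB : ℂ) * (p yA yB xA xB : ℂ) := by
        intro yA yB
        rw [Matrix.submatrix_mul_equiv _ _ _ τ _, trace_submatrix_equiv' τ,
          ← Matrix.mul_kronecker_mul, Matrix.trace_kronecker, h1, h2, mul_comm]
      calc (∑ yA : Y, ((ρ1 ⊗ₖ ρ2).submatrix ⇑τ ⇑τ *
              ∑ yB : Y, ((E1 xA yA ⊗ₖ F1 xB yB) ⊗ₖ (E2 yA zA ⊗ₖ F2 yB zB)).submatrix ⇑τ ⇑τ).trace)
          = ∑ yA : Y, ∑ yB : Y, (q zA zB yA yB : ℂ) * (p yA yB xA xB : ℂ) := by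
            apply Finset.sum_congr rfl; intro yA _
            rw [Finset.mul_sum, Matrix.trace_sum]
            exact Finset.sum_congr rfl fun yB _ => step yA yB
        _ = (Comp q p zA zB xA xB : ℂ) := by
            unfold Comp
            push_cast
            rfl
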